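/- Let n ≥ 2 be an integer, x̄ ∈ ℝ, s > 0, α ∈ (0, 1), and let t > 0 satisfy F_{n-1}(t) - F_{n-1}(-t) = 1 - α. Set c₁(n) = (Γ(n/2)/Γ((n-1)/2)) √(2/(n-1)) and k = c₁(n)/(√n · f_{n-1}(t)). Define, for reals ℓ ≤ u, the posterior expected loss Λ(ℓ, u) = c₁(n)(u - ℓ)/s - k (F_{n-1}(√n(u - x̄)/s) - F_{n-1}(√n(ℓ - x̄)/s)). Then Λ attains its minimum over {(ℓ, u) : ℓ ≤ u} at ℓ* = x̄ - t s/√n and u* = x̄ + t s/√n: for all reals ℓ ≤ u, Λ(ℓ, u) ≥ Λ(ℓ*, u*). That is, the generalized Bayes rule under the loss length(C)/σ - k·1{μ ∈ C} and the noninformative prior 1/σ² is the usual 1 - α confidence interval [x̄ - t s/√n, x̄ + t s/√n] for the normal mean. -/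

import Mathlib

open MeasureTheory

/-- Student t pdf with `m` degrees of freedom. -/
noncomputable def tPdf (m : ℕ) (x : ℝ) : ℝ :=
  (Real.Gamma (((m : ℝ) + 1) / 2) / (Real.sqrt ((m : ℝ) * Real.pi) * Real.Gamma ((m : ℝ) / 2))) *
    (1 + x ^ 2 / (m : ℝ)) ^ (-(((m : ℝ) + 1) / 2))

/-- Student t cdf with `m` degrees of freedom. -/
noncomputable def tCdf (m : ℕ) (x : ℝ) : ℝ :=
  ∫ u in Set.Iic x, tPdf m u

lemma tPdf_const_pos (m : ℕ) (hm : 1 ≤ m) :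
    0 < Real.Gamma (((m : ℝ) + 1) / 2) / (Real.sqrt ((m : ℝ) * Real.pi) * Real.Gamma ((m : ℝ) / 2)) := by
  have hm' : (0:ℝ) < m := by exact_mod_cast hm
  apply div_pos (Real.Gamma_pos_of_pos (by linarith))
  exact mul_pos (Real.sqrt_pos.2 (mul_pos hm' Real.pi_pos)) (Real.Gamma_pos_of_pos (by positivity))

lemma tPdf_pos (m : ℕ) (hm : 1 ≤ m) (x : ℝ) : 0 < tPdf m x := by
  have hm' : (0:ℝ) < m := by exact_mod_cast hm
  exact mul_pos (tPdf_const_pos m hm) (Real.rpow_pos_of_pos (by positivity) _)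

lemma tPdf_anti (m : ℕ) (hm : 1 ≤ m) {x y : ℝ} (h : x ^ 2 ≤ y ^ 2) : tPdf m y ≤ tPdf m x := by
  have hm' : (0:ℝ) < m := by exact_mod_cast hm
  apply mul_le_mul_of_nonneg_left _ (tPdf_const_pos m hm).le
  apply Real.rpow_le_rpow_of_nonpos (by positivity)
  · gcongr
  · have : (0:ℝ) ≤ ((m:ℝ)+1)/2 := by positivity
    linarith

lemma tPdf_continuous (m : ℕ) (hm : 1 ≤ m) : Continuous (tPdf m) := by
  have hm' : (0:ℝ) < m := by exact_mod_cast hm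
  apply Continuous.mul continuous_const
  apply Continuous.rpow_const
  · fun_prop
  · intro x
    left
    positivity

lemma tPdf_integrable (m : ℕ) (hm : 1 ≤ m) : Integrable (tPdf m) := by
  have hm' : (1:ℝ) ≤ m := by exact_mod_cast hm
  have hC := tPdf_const_pos m hm
  set C := Real.Gamma (((m : ℝ) + 1) / 2) / (Real.sqrt ((m : ℝ) * Real.pi) * Real.Gamma ((m : ℝ) / 2)) with hCdef
  have hcont : Continuous (tPdf m) := tPdf_continuous m hm
  apply Integrable.mono ((integrable_inv_one_add_sq.const_mul (C * m)))
    hcont.aestronglyMeasurable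
  filter_upwards with x
  have h1 : (1 + x ^ 2 / (m:ℝ)) ^ (-(((m : ℝ) + 1) / 2)) ≤ (1 + x ^ 2 / (m:ℝ)) ^ (-1 : ℝ) := by
    apply Real.rpow_le_rpow_of_exponent_le (by linarith [div_nonneg (sq_nonneg x) (le_trans zero_le_one hm')]) (by linarith)
  have h2 : (1 + x ^ 2 / (m:ℝ)) ^ (-1 : ℝ) ≤ (m:ℝ) * (1 + x ^ 2)⁻¹ := by
    rw [Real.rpow_neg_one,
      show (m:ℝ) * (1 + x ^ 2)⁻¹ = ((1 + x ^ 2) / m)⁻¹ by field_simp]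
    apply inv_anti₀ (by positivity)
    rw [div_le_iff₀ (by positivity : (0:ℝ) < m), add_mul,
      div_mul_cancel₀ _ (by positivity : (m:ℝ) ≠ 0)]
    linarith
  have hb : tPdf m x ≤ C * (m:ℝ) * (1 + x ^ 2)⁻¹ := by
    calc tPdf m x ≤ C * ((m:ℝ) * (1 + x ^ 2)⁻¹) := by
          unfold tPdf
          rw [← hCdef]
          exact mul_le_mul_of_nonneg_left (h1.trans h2) hC.le
      _ = C * (m:ℝ) * (1 + x ^ 2)⁻¹ := by ring
  calc ‖tPdf m x‖ = tPdf m x := Real.norm_of_nonneg (tPdf_pos m hm x).le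
    _ ≤ C * (m:ℝ) * (1 + x ^ 2)⁻¹ := hb
    _ ≤ ‖C * (m:ℝ) * (1 + x ^ 2)⁻¹‖ := le_abs_self _

lemma tCdf_sub (m : ℕ) (hm : 1 ≤ m) {a b : ℝ} (hab : a ≤ b) :
    tCdf m b - tCdf m a = ∫ x in Set.Ioc a b, tPdf m x := by
  have hint := tPdf_integrable m hm
  unfold tCdf
  rw [← Set.Iic_union_Ioc_eq_Iic hab,
    setIntegral_union (Set.Iic_disjoint_Ioc le_rfl) measurableSet_Ioc
      hint.integrableOn hint.integrableOn]
  ring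

lemma key_integral (g : ℝ → ℝ) {t a b : ℝ}
    (hgS : IntegrableOn g (Set.Ioc a b)) (hgT : IntegrableOn g (Set.Ioc (-t) t))
    (hneg : ∀ x ∈ Set.Ioc (-t) t, g x ≤ 0)
    (hpos : ∀ x, x ∉ Set.Ioc (-t) t → 0 ≤ g x) :
    ∫ x in Set.Ioc (-t) t, g x ≤ ∫ x in Set.Ioc a b, g x := by
  have hS : MeasurableSet (Set.Ioc a b) := measurableSet_Ioc
  have hT : MeasurableSet (Set.Ioc (-t) t) := measurableSet_Ioc
  have e1 := integral_inter_add_diff (μ := volume) hS hgT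
  have e2 := integral_inter_add_diff (μ := volume) hT hgS
  rw [Set.inter_comm] at e1
  have h1 : ∫ x in Set.Ioc (-t) t \ Set.Ioc a b, g x ≤ 0 :=
    setIntegral_nonpos (hT.diff hS) fun x hx => hneg x hx.1
  have h2 : 0 ≤ ∫ x in Set.Ioc a b \ Set.Ioc (-t) t, g x :=
    setIntegral_nonneg (hS.diff hT) fun x hx => hpos x hx.2
  linarith

/-- Let `n ≥ 2`, `x̄ ∈ ℝ`, `s > 0`, `α ∈ (0,1)`, `t > 0` with
`F_{n-1}(t) - F_{n-1}(-t) = 1 - α`, `c₁(n) = (Γ(n/2)/Γ((n-1)/2))√(2/(n-1))` and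
`k = c₁(n)/(√n f_{n-1}(t))`. The posterior expected loss
`Λ(ℓ, u) = c₁(n)(u - ℓ)/s - k (F_{n-1}(√n(u - x̄)/s) - F_{n-1}(√n(ℓ - x̄)/s))`
attains its minimum over `{ℓ ≤ u}` at `ℓ* = x̄ - t s/√n`, `u* = x̄ + t s/√n`:
the generalized Bayes rule is the usual `1 - α` confidence interval. -/
theorem stmt11 (n : ℕ) (hn : 2 ≤ n) (xbar : ℝ) (s : ℝ) (hs : 0 < s)
    (α : ℝ) (hα0 : 0 < α) (hα1 : α < 1)
    (t : ℝ) (ht : 0 < t) (htα : tCdf (n - 1) t - tCdf (n - 1) (-t) = 1 - α)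
    (c₁ k : ℝ)
    (hc₁ : c₁ = (Real.Gamma ((n : ℝ) / 2) / Real.Gamma (((n : ℝ) - 1) / 2)) *
      Real.sqrt (2 / ((n : ℝ) - 1)))
    (hk : k = c₁ / (Real.sqrt n * tPdf (n - 1) t))
    (Λ : ℝ → ℝ → ℝ)
    (hΛ : ∀ l u : ℝ, Λ l u = c₁ * (u - l) / s -
      k * (tCdf (n - 1) (Real.sqrt n * (u - xbar) / s) -
           tCdf (n - 1) (Real.sqrt n * (l - xbar) / s)))
    (l u : ℝ) (hlu : l ≤ u) :
    Λ (xbar - t * s / Real.sqrt n) (xbar + t * s / Real.sqrt n) ≤ Λ l u := by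
  set m := n - 1 with hmdef
  have hm : 1 ≤ m := by omega
  have hncast : (2:ℝ) ≤ (n:ℝ) := by exact_mod_cast hn
  have hsn : (0:ℝ) < Real.sqrt n := Real.sqrt_pos.2 (by linarith)
  have hft : 0 < tPdf m t := tPdf_pos m hm t
  have hc₁pos : 0 < c₁ := by
    rw [hc₁]
    apply mul_pos
    · exact div_pos (Real.Gamma_pos_of_pos (by linarith)) (Real.Gamma_pos_of_pos (by linarith))
    · apply Real.sqrt_pos.2
      apply div_pos (by norm_num) (by linarith)
  have hKnn : 0 ≤ c₁ / (Real.sqrt n * tPdf m t) := by positivity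
  -- representation of Λ
  have hrep : ∀ l' u' : ℝ, l' ≤ u' →
      Λ l' u' = c₁ / (Real.sqrt n * tPdf m t) *
        ∫ x in Set.Ioc (Real.sqrt n * (l' - xbar) / s) (Real.sqrt n * (u' - xbar) / s),
          (tPdf m t - tPdf m x) := by
    intro l' u' hlu'
    set a := Real.sqrt n * (l' - xbar) / s with hadef
    set b := Real.sqrt n * (u' - xbar) / s with hbdef
    have hab : a ≤ b := by
      rw [hadef, hbdef]
      gcongr
    have hi : ∫ x in Set.Ioc a b, (tPdf m t - tPdf m x)
        = (b - a) * tPdf m t - (tCdf m b - tCdf m a) := by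
      have hI := integral_sub (integrableOn_const measure_Ioc_lt_top.ne : IntegrableOn (fun _ => tPdf m t) (Set.Ioc a b))
        ((tPdf_integrable m hm).restrict : Integrable (tPdf m) (volume.restrict (Set.Ioc a b)))
      rw [hI, tCdf_sub m hm hab,
        setIntegral_const, measureReal_def, Real.volume_Ioc, ENNReal.toReal_ofReal (by linarith),
        smul_eq_mul]
    rw [hΛ, hk, hi]
    have hba : b - a = Real.sqrt n * (u' - l') / s := by
      rw [hadef, hbdef]; field_simp; ring
    rw [hba]
    have h2 : Real.sqrt n * Real.sqrt n = (n:ℝ) :=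
      Real.mul_self_sqrt (by linarith)
    field_simp
    rw [hadef, hbdef]
  -- endpoints map to -t and t
  have hlstar : Real.sqrt n * ((xbar - t * s / Real.sqrt n) - xbar) / s = -t := by
    field_simp
    ring
  have hustar : Real.sqrt n * ((xbar + t * s / Real.sqrt n) - xbar) / s = t := by
    field_simp
    ring
  have hlu' : xbar - t * s / Real.sqrt n ≤ xbar + t * s / Real.sqrt n := by
    have : 0 < t * s / Real.sqrt n := by positivity
    linarith
  rw [hrep l u hlu, hrep _ _ hlu', hlstar, hustar]
  apply mul_le_mul_of_nonneg_left _ hKnn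
  have hcont : Continuous fun x => tPdf m t - tPdf m x :=
    continuous_const.sub (tPdf_continuous m hm)
  apply key_integral
  · exact hcont.integrableOn_Ioc
  · exact hcont.integrableOn_Ioc
  · intro x hx
    simp only [Set.mem_Ioc] at hx
    have : x ^ 2 ≤ t ^ 2 := sq_le_sq' (by linarith [hx.1]) hx.2
    linarith [tPdf_anti m hm this]
  · intro x hx
    simp only [Set.mem_Ioc, not_and_or, not_lt, not_le] at hx
    have : t ^ 2 ≤ x ^ 2 := by
      rcases hx with h | h
      · nlinarith
      · nlinarith
    linarith [tPdf_anti m hm this]
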